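/- Let T be a compact self-adjoint operator on a separable Hilbert space H with Id + T ≥ 0 (positive semidefinite). Then the eigenspace of T corresponding to the eigenvalue -1 is finite-dimensional, and if φ₁,…,φ_{l₀} is an orthonormal basis of this eigenspace, then for a vector u ∈ H there exists ε > 0 with Id + T - ε u⊗u ≥ 0 if and only if ⟨u, φⱼ⟩ = 0 for all j = 1,…,l₀. -/

import Mathlib

open scoped InnerProductSpace

section Aux
variable {H : Type*} [NormedAddCommGroup H] [InnerProductSpace ℝ H] [CompleteSpace H]


variable {H : Type*} [NormedAddCommGroup H] [InnerProductSpace ℝ H] [CompleteSpace H]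

lemma aux_cs (A : H →L[ℝ] H) (hsa : IsSelfAdjoint A) (hpos : ∀ x : H, 0 ≤ ⟪x, A x⟫_ℝ)
    (x : H) : ‖A x‖ ^ 2 ≤ ‖A‖ * ⟪x, A x⟫_ℝ := by
  have hsym : ∀ a b : H, ⟪A a, b⟫_ℝ = ⟪a, A b⟫_ℝ := fun a b => hsa.isSymmetric a b
  have key : ∀ t : ℝ, 0 ≤ ⟪A x, A (A x)⟫_ℝ * (t * t) + (2 * ‖A x‖ ^ 2) * t + ⟪x, A x⟫_ℝ := by
    intro t
    have h := hpos (x + t • A x)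
    have e1 : ⟪x, A (A x)⟫_ℝ = ‖A x‖ ^ 2 := by
      rw [← hsym x (A x), real_inner_self_eq_norm_sq]
    have e2 : ⟪A x, A x⟫_ℝ = ‖A x‖ ^ 2 := real_inner_self_eq_norm_sq _
    simp only [map_add, map_smul, inner_add_left, inner_add_right, real_inner_smul_left,
      real_inner_smul_right] at h
    rw [e1, e2] at h
    linarith [h]
  have hd := discrim_le_zero key
  unfold discrim at hd
  have h1 : ⟪A x, A (A x)⟫_ℝ ≤ ‖A‖ * ‖A x‖ ^ 2 := by
    calc ⟪A x, A (A x)⟫_ℝ ≤ ‖A x‖ * ‖A (A x)‖ := real_inner_le_norm _ _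
      _ ≤ ‖A x‖ * (‖A‖ * ‖A x‖) := by
          exact mul_le_mul_of_nonneg_left (A.le_opNorm (A x)) (norm_nonneg _)
      _ = ‖A‖ * ‖A x‖ ^ 2 := by ring
  rcases eq_or_lt_of_le (norm_nonneg (A x)) with h0 | h0
  · have hz : A x = 0 := norm_eq_zero.1 h0.symm
    rw [hz]
    simp only [norm_zero, inner_zero_right]
    norm_num
  · nlinarith [hpos x, sq_nonneg ‖A x‖, mul_pos h0 h0]

lemma aux_closed (T : H →L[ℝ] H) :
    IsClosed ((Module.End.eigenspace (T : H →ₗ[ℝ] H) (-1) : Submodule ℝ H) : Set H) := by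
  have he : ((Module.End.eigenspace (T : H →ₗ[ℝ] H) (-1) : Submodule ℝ H) : Set H)
      = {x : H | T x + x = 0} := by
    ext x
    simp only [SetLike.mem_coe, Module.End.mem_eigenspace_iff, Set.mem_setOf_eq]
    constructor
    · intro h
      simp only [ContinuousLinearMap.coe_coe] at h
      rw [h]; simp
    · intro h
      show T x = (-1 : ℝ) • x
      rw [neg_one_smul]
      linear_combination (norm := abel) h
  rw [he]
  exact isClosed_eq (T.continuous.add continuous_id) continuous_const

lemma aux_findim (T : H →L[ℝ] H) (hT : IsCompactOperator T) :
    FiniteDimensional ℝ (Module.End.eigenspace (T : H →ₗ[ℝ] H) (-1)) := by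
  set E := Module.End.eigenspace (T : H →ₗ[ℝ] H) (-1) with hE
  obtain ⟨K, hKc, hKsub⟩ := hT.image_closedBall_subset_compact (1 : ℝ)
  have hball : IsCompact (Metric.closedBall (0 : E) 1) := by
    rw [Subtype.isCompact_iff]
    have himg : Subtype.val '' Metric.closedBall (0 : E) 1
        = (E : Set H) ∩ Metric.closedBall (0 : H) 1 := by
      ext x
      constructor
      · rintro ⟨⟨v, hv⟩, hvb, rfl⟩
        refine ⟨hv, ?_⟩
        simpa [Metric.mem_closedBall, dist_zero_right] using hvb
      · rintro ⟨hx, hxb⟩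
        exact ⟨⟨x, hx⟩, by simpa [Metric.mem_closedBall, dist_zero_right] using hxb, rfl⟩
    rw [himg]
    apply hKc.of_isClosed_subset ((aux_closed T).inter Metric.isClosed_closedBall)
    rintro x ⟨hxE, hxb⟩
    have hTx : T (-x) = x := by
      have := Module.End.mem_eigenspace_iff.1 hxE
      simp only [ContinuousLinearMap.coe_coe] at this
      rw [map_neg, this, neg_one_smul, neg_neg]
    exact hKsub ⟨-x, by simpa [Metric.mem_closedBall, dist_zero_right] using hxb, hTx⟩
  exact FiniteDimensional.of_isCompact_closedBall₀ ℝ one_pos hball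

lemma aux_gap (T : H →L[ℝ] H) (hT : IsCompactOperator T) (hTsa : IsSelfAdjoint T)
    (hpos : ∀ x : H, 0 ≤ ⟪x, x⟫_ℝ + ⟪x, T x⟫_ℝ) :
    ∃ δ : ℝ, 0 < δ ∧ ∀ x ∈ (Module.End.eigenspace (T : H →ₗ[ℝ] H) (-1))ᗮ,
      δ * ‖x‖ ^ 2 ≤ ⟪x, x⟫_ℝ + ⟪x, T x⟫_ℝ := by
  set E := Module.End.eigenspace (T : H →ₗ[ℝ] H) (-1) with hE
  set A : H →L[ℝ] H := 1 + T with hA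
  have hAapp : ∀ x : H, A x = x + T x := fun x => rfl
  have hAsa : IsSelfAdjoint A := (IsSelfAdjoint.one (H →L[ℝ] H)).add hTsa
  have hApos : ∀ x : H, 0 ≤ ⟪x, A x⟫_ℝ := by
    intro x; rw [hAapp, inner_add_right]; exact hpos x
  have hQA : ∀ x : H, ⟪x, A x⟫_ℝ = ⟪x, x⟫_ℝ + ⟪x, T x⟫_ℝ := by
    intro x; rw [hAapp, inner_add_right]
  by_contra hcon
  push_neg at hcon
  -- build the sequence
  have hseq : ∀ n : ℕ, ∃ y : H, y ∈ Eᗮ ∧ ‖y‖ = 1 ∧ ⟪y, A y⟫_ℝ < 1 / (n + 1) := by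
    intro n
    obtain ⟨x, hxE, hxlt⟩ := hcon (1 / (n + 1)) (by positivity)
    have hx0 : x ≠ 0 := by
      rintro rfl
      simp only [norm_zero, inner_zero_left, ContinuousLinearMap.map_zero] at hxlt
      norm_num at hxlt
    have hnx : (0:ℝ) < ‖x‖ := norm_pos_iff.2 hx0
    refine ⟨‖x‖⁻¹ • x, Submodule.smul_mem _ _ hxE, ?_, ?_⟩
    · rw [norm_smul, norm_inv, norm_norm, inv_mul_cancel₀ hnx.ne']
    · have : ⟪‖x‖⁻¹ • x, A (‖x‖⁻¹ • x)⟫_ℝ = ‖x‖⁻¹ * ‖x‖⁻¹ * (⟪x, x⟫_ℝ + ⟪x, T x⟫_ℝ) := by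
        rw [map_smul, real_inner_smul_left, real_inner_smul_right, hQA]; ring
      rw [this]
      have h2 : ⟪x, x⟫_ℝ + ⟪x, T x⟫_ℝ < 1 / (n + 1) * ‖x‖ ^ 2 := by linarith
      calc ‖x‖⁻¹ * ‖x‖⁻¹ * (⟪x, x⟫_ℝ + ⟪x, T x⟫_ℝ)
          < ‖x‖⁻¹ * ‖x‖⁻¹ * (1 / (n + 1) * ‖x‖ ^ 2) := by
            apply mul_lt_mul_of_pos_left h2; positivity
        _ = 1 / (n + 1) := by rw [pow_two]; field_simp
  choose y hyE hynorm hyQ using hseq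
  -- Q (y n) → 0
  have hQ0 : Filter.Tendsto (fun n => ⟪y n, A (y n)⟫_ℝ) Filter.atTop (nhds 0) := by
    apply squeeze_zero (fun n => hApos (y n)) (fun n => (hyQ n).le)
    exact tendsto_one_div_add_atTop_nhds_zero_nat
  -- A (y n) → 0
  have hAy0 : Filter.Tendsto (fun n => A (y n)) Filter.atTop (nhds 0) := by
    rw [tendsto_zero_iff_norm_tendsto_zero]
    have hsq : Filter.Tendsto (fun n => ‖A (y n)‖ ^ 2) Filter.atTop (nhds 0) := by
      apply squeeze_zero (fun n => sq_nonneg _) (fun n => aux_cs A hAsa hApos (y n))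
      simpa using hQ0.const_mul ‖A‖
    have := hsq.sqrt
    simp only [Real.sqrt_zero] at this
    convert this using 2 with n
    rw [Real.sqrt_sq (norm_nonneg _)]
  -- subsequence of T (y n) converging
  obtain ⟨K, hKc, hKsub⟩ :=
    hT.image_closedBall_subset_compact (1 : ℝ)
  have hmem : ∀ n, T (y n) ∈ K := fun n =>
    hKsub ⟨y n, by simp [Metric.mem_closedBall, (hynorm n).le, dist_zero_right], rfl⟩
  obtain ⟨z, -, φ, hφ, hz⟩ := hKc.tendsto_subseq hmem
  -- y ∘ φ → -z
  have hyz : Filter.Tendsto (fun k => y (φ k)) Filter.atTop (nhds (-z)) := by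
    have : ∀ k, y (φ k) = A (y (φ k)) - T (y (φ k)) := by
      intro k; rw [hAapp]; abel
    have h1 := (hAy0.comp hφ.tendsto_atTop).sub hz
    rw [zero_sub] at h1
    exact h1.congr (fun k => (this k).symm)
  -- conclusions about z
  have hzn : ‖z‖ = 1 := by
    have := (hyz.norm)
    simp only [norm_neg] at this
    have h2 : Filter.Tendsto (fun k => ‖y (φ k)‖) Filter.atTop (nhds 1) := by
      simpa [hynorm] using tendsto_const_nhds (a := (1:ℝ)) (f := Filter.atTop (α := ℕ))
    exact tendsto_nhds_unique this h2
  have hzE : -z ∈ E := by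
    rw [hE, Module.End.mem_eigenspace_iff]
    have hTz : Filter.Tendsto (fun k => T (y (φ k))) Filter.atTop (nhds (T (-z))) :=
      (T.continuous.tendsto _).comp hyz
    have := tendsto_nhds_unique hTz hz
    show T (-z) = (-1 : ℝ) • (-z)
    rw [this, neg_one_smul, neg_neg]
  have hzEo : -z ∈ Eᗮ := by
    have hcl : IsClosed (Eᗮ : Set H) := Submodule.isClosed_orthogonal E
    exact hcl.mem_of_tendsto hyz (Filter.Eventually.of_forall (fun k => hyE (φ k)))
  have : -z = 0 := by
    have h0 : ⟪-z, -z⟫_ℝ = 0 := (Submodule.mem_orthogonal E (-z)).1 hzEo (-z) hzE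
    exact inner_self_eq_zero.1 h0
  rw [show z = 0 by simpa using this] at hzn
  simp at hzn

end Aux

/-- For a compact self-adjoint operator T on a separable real Hilbert space with
Id + T ≥ 0: the eigenspace of T at -1 is finite-dimensional, and if φ₁,…,φ_{l₀} is an
orthonormal basis of this eigenspace, then for u ∈ H there is ε > 0 with
Id + T - ε u⊗u ≥ 0 iff ⟨u, φⱼ⟩ = 0 for all j. -/
theorem stmt6 {H : Type*} [NormedAddCommGroup H] [InnerProductSpace ℝ H]
    [CompleteSpace H] [TopologicalSpace.SeparableSpace H]
    (T : H →L[ℝ] H) (hT : IsCompactOperator T) (hTsa : IsSelfAdjoint T)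
    (hpos : ∀ x : H, 0 ≤ ⟪x, x⟫_ℝ + ⟪x, T x⟫_ℝ) :
    FiniteDimensional ℝ (Module.End.eigenspace (T : H →ₗ[ℝ] H) (-1)) ∧
    ∀ (l₀ : ℕ) (φ : Fin l₀ → H), Orthonormal ℝ φ →
      Submodule.span ℝ (Set.range φ) = Module.End.eigenspace (T : H →ₗ[ℝ] H) (-1) →
      ∀ u : H,
        (∃ ε : ℝ, 0 < ε ∧ ∀ x : H, 0 ≤ ⟪x, x⟫_ℝ + ⟪x, T x⟫_ℝ - ε * ⟪u, x⟫_ℝ ^ 2) ↔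
        (∀ j, ⟪u, φ j⟫_ℝ = 0) := by
  set E := Module.End.eigenspace (T : H →ₗ[ℝ] H) (-1) with hE
  have hEfd : FiniteDimensional ℝ E := aux_findim T hT
  refine ⟨hEfd, fun l₀ φ hφon hφspan u => ?_⟩
  have hφmem : ∀ j, φ j ∈ E := fun j =>
    hφspan ▸ Submodule.subset_span (Set.mem_range_self j)
  have hEapp : ∀ v ∈ E, T v = -v := by
    intro v hv
    have := Module.End.mem_eigenspace_iff.1 hv
    simp only [ContinuousLinearMap.coe_coe] at this
    rw [this, neg_one_smul]
  constructor
  · rintro ⟨ε, hε, hineq⟩ j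
    have h := hineq (φ j)
    have h1 : ⟪φ j, φ j⟫_ℝ = 1 := by
      rw [real_inner_self_eq_norm_sq, hφon.1 j]; norm_num
    have h2 : ⟪φ j, T (φ j)⟫_ℝ = -1 := by
      rw [hEapp _ (hφmem j), inner_neg_right, h1]
    rw [h1, h2] at h
    have hsq : ⟪u, φ j⟫_ℝ ^ 2 ≤ 0 := by nlinarith
    exact pow_eq_zero_iff (n := 2) (by norm_num) |>.1
      (le_antisymm hsq (sq_nonneg _))
  · intro hu
    have huE : u ∈ Eᗮ := by
      rw [Submodule.mem_orthogonal]
      intro v hv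
      rw [← hφspan] at hv
      induction hv using Submodule.span_induction with
      | mem v hv =>
          obtain ⟨j, rfl⟩ := hv
          rw [real_inner_comm]; exact hu j
      | zero => simp
      | add a b _ _ ha hb => rw [inner_add_left, ha, hb, add_zero]
      | smul c a _ ha => rw [real_inner_smul_left, ha, mul_zero]
    obtain ⟨δ, hδ, hgap⟩ := aux_gap T hT hTsa hpos
    rcases eq_or_ne u 0 with rfl | hu0
    · exact ⟨1, one_pos, fun x => by
        simpa using hpos x⟩
    have hun : (0:ℝ) < ‖u‖ := norm_pos_iff.2 hu0
    haveI : CompleteSpace E := FiniteDimensional.complete ℝ E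
    refine ⟨δ / ‖u‖ ^ 2, by positivity, fun x => ?_⟩
    set p : H := (Submodule.orthogonalProjectionOnto E x : H) with hp
    set q : H := x - p with hq
    have hpE : p ∈ E := (Submodule.orthogonalProjectionOnto E x).2
    have hqE : q ∈ Eᗮ := E.sub_starProjection_mem_orthogonal x
    have hxpq : x = p + q := by rw [hq]; abel
    have hTp : T p = -p := hEapp p hpE
    have hpq : ⟪p, q⟫_ℝ = 0 := hqE p hpE
    have hQx : ⟪x, x⟫_ℝ + ⟪x, T x⟫_ℝ = ⟪q, q⟫_ℝ + ⟪q, T q⟫_ℝ := by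
      rw [hxpq]
      simp only [map_add, hTp, inner_add_left, inner_add_right, inner_neg_right]
      have h1 : ⟪p, T q⟫_ℝ = ⟪T p, q⟫_ℝ := (hTsa.isSymmetric p q).symm
      have h2 : ⟪q, p⟫_ℝ = 0 := by rw [real_inner_comm]; exact hpq
      rw [h1, hTp, inner_neg_left, hpq, h2]
      ring
    have hux : ⟪u, x⟫_ℝ = ⟪u, q⟫_ℝ := by
      rw [hxpq, inner_add_right]
      have : ⟪u, p⟫_ℝ = 0 := by rw [real_inner_comm]; exact huE p hpE
      rw [this, zero_add]
    have hcs : ⟪u, q⟫_ℝ ^ 2 ≤ ‖u‖ ^ 2 * ‖q‖ ^ 2 := by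
      have h := abs_real_inner_le_norm u q
      have h2 := mul_self_le_mul_self (abs_nonneg ⟪u, q⟫_ℝ) h
      rw [abs_mul_abs_self] at h2
      nlinarith
    have hg := hgap q hqE
    rw [hQx, hux]
    have hfinal : δ / ‖u‖ ^ 2 * ⟪u, q⟫_ℝ ^ 2 ≤ δ * ‖q‖ ^ 2 := by
      rw [div_mul_eq_mul_div, div_le_iff₀ (by positivity)]
      calc δ * ⟪u, q⟫_ℝ ^ 2 ≤ δ * (‖u‖ ^ 2 * ‖q‖ ^ 2) :=
            mul_le_mul_of_nonneg_left hcs hδ.le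
        _ = δ * ‖q‖ ^ 2 * ‖u‖ ^ 2 := by ring
    linarith
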